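/- Let f : Ω₀ → Ω₁ be a bijective bi-Lipschitz map between open subsets of ℝⁿ with constants C, C⁻¹ as above. Then the pullback H(u) = u ∘ f maps H¹(Ω₁) boundedly into H¹(Ω₀), with ‖u ∘ f‖_{H¹(Ω₀)} ≤ K·‖u‖_{H¹(Ω₁)} for a constant K depending only on C and n. -/

import Mathlib

open MeasureTheory
open scoped ENNReal NNReal

lemma euclid_coord_le_norm {n : ℕ} (x : EuclideanSpace ℝ (Fin n)) (i : Fin n) :
    ‖x i‖ ≤ ‖x‖ := by
  rw [EuclideanSpace.norm_eq]
  have h : ‖x i‖ = Real.sqrt (‖x i‖ ^ 2) := (Real.sqrt_sq (norm_nonneg _)).symm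
  rw [h]
  apply Real.sqrt_le_sqrt
  exact Finset.single_le_sum (f := fun j => ‖x j‖ ^ 2) (fun j _ => sq_nonneg _)
    (Finset.mem_univ i)

/-- A `K`-Lipschitz-on-`s` map on `ℝⁿ` increases Lebesgue measure of `s` by at most `K ^ n`. -/
lemma vol_image_le_of_lipschitzOnWith {n : ℕ}
    {g : EuclideanSpace ℝ (Fin n) → EuclideanSpace ℝ (Fin n)}
    {s : Set (EuclideanSpace ℝ (Fin n))} {K : ℝ≥0} (hg : LipschitzOnWith K g s) :
    volume (g '' s) ≤ (K : ℝ≥0∞) ^ n * volume s := by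
  set μH : Measure (EuclideanSpace ℝ (Fin n)) := Measure.hausdorffMeasure (n : ℝ) with hμH
  haveI : μH.IsAddHaarMeasure := by
    simpa [hμH, finrank_euclideanSpace_fin] using
      MeasureTheory.isAddHaarMeasure_hausdorffMeasure (E := EuclideanSpace ℝ (Fin n))
  have heq : μH = μH.addHaarScalarFactor volume • volume :=
    Measure.isAddLeftInvariant_eq_smul μH volume
  set c := μH.addHaarScalarFactor volume with hc
  have hcpos : 0 < c := Measure.addHaarScalarFactor_pos_of_isAddHaarMeasure _ _
  have hμ : ∀ A : Set (EuclideanSpace ℝ (Fin n)), μH A = (c : ℝ≥0∞) * volume A := by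
    intro A
    conv_lhs => rw [heq]
    rw [Measure.smul_apply, ENNReal.smul_def, smul_eq_mul]
  have him := hg.hausdorffMeasure_image_le (d := (n : ℝ)) (Nat.cast_nonneg n)
  rw [ENNReal.rpow_natCast] at him
  rw [hμ, hμ] at him
  have him' : (c : ℝ≥0∞) * volume (g '' s) ≤ (c : ℝ≥0∞) * ((K : ℝ≥0∞) ^ n * volume s) := by
    calc (c : ℝ≥0∞) * volume (g '' s) ≤ (K : ℝ≥0∞) ^ n * ((c : ℝ≥0∞) * volume s) := him
    _ = (c : ℝ≥0∞) * ((K : ℝ≥0∞) ^ n * volume s) := by ring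
  exact (ENNReal.mul_le_mul_iff_right (by exact_mod_cast hcpos.ne') ENNReal.coe_ne_top).1 him'

/-- Let `f : Ω₀ → Ω₁` be a bijective bi-Lipschitz map (constants `C, C⁻¹`) between
open subsets of `ℝⁿ`.  Then the pullback `u ↦ u ∘ f` is bounded for the `H¹` norm:
there is a constant `K` (depending only on `C` and `n`) such that for every
(Lipschitz) `u`, `‖u ∘ f‖²_{H¹(Ω₀)} ≤ K²·‖u‖²_{H¹(Ω₁)}`, the `H¹` norm squared being
the integral of `|u|² + ‖∇u‖²`. -/
theorem pullback_H1_bounded_of_biLipschitz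
    (n : ℕ) (Ω₀ Ω₁ : Set (EuclideanSpace ℝ (Fin n)))
    (hΩ₀ : IsOpen Ω₀) (hΩ₁ : IsOpen Ω₁)
    (C : ℝ) (hC : 0 < C) (hC1 : C ≤ 1)
    (f : EuclideanSpace ℝ (Fin n) → EuclideanSpace ℝ (Fin n))
    (hbij : Set.BijOn f Ω₀ Ω₁)
    (hbl : ∀ x ∈ Ω₀, ∀ y ∈ Ω₀,
      C * ‖x - y‖ ≤ ‖f x - f y‖ ∧ ‖f x - f y‖ ≤ C⁻¹ * ‖x - y‖) :
    ∃ K : NNReal, ∀ (u : EuclideanSpace ℝ (Fin n) → ℝ) (Lu : NNReal),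
      LipschitzOnWith Lu u Ω₁ →
      ∫⁻ x in Ω₀, ((‖u (f x)‖₊ : ENNReal) ^ 2
          + (‖fderiv ℝ (u ∘ f) x‖₊ : ENNReal) ^ 2) ∂volume ≤
        (K : ENNReal) ^ 2 *
          ∫⁻ y in Ω₁, ((‖u y‖₊ : ENNReal) ^ 2
            + (‖fderiv ℝ u y‖₊ : ENNReal) ^ 2) ∂volume := by
  classical
  have hCinv : (0:ℝ) < C⁻¹ := inv_pos.mpr hC
  set C' : ℝ≥0 := Real.toNNReal C⁻¹ with hC'def
  have hC'coe : (C' : ℝ) = C⁻¹ := Real.coe_toNNReal _ hCinv.le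
  have hC'1 : (1 : ℝ≥0) ≤ C' := by
    rw [← NNReal.coe_le_coe, hC'coe, NNReal.coe_one]
    exact (one_le_inv_iff₀).2 ⟨hC, hC1⟩
  have mΩ₀ : MeasurableSet Ω₀ := hΩ₀.measurableSet
  have mΩ₁ : MeasurableSet Ω₁ := hΩ₁.measurableSet
  -- f is Lipschitz on Ω₀
  have hfl : LipschitzOnWith C' f Ω₀ := by
    apply LipschitzOnWith.of_dist_le_mul
    intro x hx y hy
    rw [dist_eq_norm, dist_eq_norm, hC'coe]
    exact (hbl x hx y hy).2
  -- the inverse g is Lipschitz on Ω₁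
  set g : EuclideanSpace ℝ (Fin n) → EuclideanSpace ℝ (Fin n) := Function.invFunOn f Ω₀ with hgdef
  have hgf : ∀ x ∈ Ω₀, g (f x) = x := fun x hx => hbij.injOn.leftInvOn_invFunOn hx
  have hgmem : ∀ y ∈ Ω₁, g y ∈ Ω₀ := by
    intro y hy
    obtain ⟨x, hx, hfx⟩ := hbij.surjOn hy
    exact Function.invFunOn_mem ⟨x, hx, hfx⟩
  have hfg : ∀ y ∈ Ω₁, f (g y) = y := by
    intro y hy
    obtain ⟨x, hx, hfx⟩ := hbij.surjOn hy
    exact Function.invFunOn_eq ⟨x, hx, hfx⟩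
  have hgl : LipschitzOnWith C' g Ω₁ := by
    apply LipschitzOnWith.of_dist_le_mul
    intro a ha b hb
    rw [dist_eq_norm, dist_eq_norm, hC'coe]
    have h1 := (hbl (g a) (hgmem a ha) (g b) (hgmem b hb)).1
    rw [hfg a ha, hfg b hb] at h1
    rw [inv_mul_eq_div, le_div_iff₀ hC]
    linarith [h1]
  -- f is a.e. measurable on Ω₀
  have hfc : ContinuousOn f Ω₀ := hfl.continuousOn
  have hfm : AEMeasurable f (volume.restrict Ω₀) := hfc.aemeasurable mΩ₀
  -- the mapped measure is dominated
  have hmap : Measure.map f (volume.restrict Ω₀) ≤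
      ((C' : ℝ≥0∞) ^ n) • volume.restrict Ω₁ := by
    rw [Measure.le_iff]
    intro s hs
    rw [Measure.map_apply_of_aemeasurable hfm hs, Measure.restrict_apply' mΩ₀,
      Measure.smul_apply, Measure.restrict_apply' mΩ₁, smul_eq_mul]
    have hsub : f ⁻¹' s ∩ Ω₀ ⊆ g '' (s ∩ Ω₁) := by
      intro x hx
      exact ⟨f x, ⟨hx.1, hbij.mapsTo hx.2⟩, hgf x hx.2⟩
    calc volume (f ⁻¹' s ∩ Ω₀) ≤ volume (g '' (s ∩ Ω₁)) := measure_mono hsub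
      _ ≤ (C' : ℝ≥0∞) ^ n * volume (s ∩ Ω₁) :=
        vol_image_le_of_lipschitzOnWith (hgl.mono Set.inter_subset_right)
  -- transfer of integrals
  have key : ∀ h : EuclideanSpace ℝ (Fin n) → ℝ≥0∞, AEMeasurable h (volume.restrict Ω₁) →
      ∫⁻ x in Ω₀, h (f x) ∂volume ≤ (C' : ℝ≥0∞) ^ n * ∫⁻ y in Ω₁, h y ∂volume := by
    intro h hh
    have hh' : AEMeasurable h (Measure.map f (volume.restrict Ω₀)) :=
      (hh.smul_measure ((C' : ℝ≥0∞) ^ n)).mono_measure hmap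
    calc ∫⁻ x in Ω₀, h (f x) ∂volume
        = ∫⁻ y, h y ∂(Measure.map f (volume.restrict Ω₀)) :=
          (lintegral_map' hh' hfm).symm
      _ ≤ ∫⁻ y, h y ∂(((C' : ℝ≥0∞) ^ n) • volume.restrict Ω₁) :=
          lintegral_mono' hmap le_rfl
      _ = (C' : ℝ≥0∞) ^ n * ∫⁻ y in Ω₁, h y ∂volume := by
          rw [lintegral_smul_measure, smul_eq_mul]
  refine ⟨C' ^ (n + 1), ?_⟩
  intro u Lu hu
  -- u is differentiable a.e. on Ω₁ (Rademacher via Lipschitz extension)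
  obtain ⟨U, hUlip, hUeq⟩ := hu.extend_real
  have hUdiff : ∀ᵐ y : EuclideanSpace ℝ (Fin n) ∂volume, DifferentiableAt ℝ U y := hUlip.ae_differentiableAt
  have huU : ∀ y ∈ Ω₁, u =ᶠ[nhds y] U :=
    fun y hy => Filter.eventually_of_mem (hΩ₁.mem_nhds hy) (fun z hz => hUeq hz)
  set N : Set (EuclideanSpace ℝ (Fin n)) := {y | ¬ DifferentiableAt ℝ u y} ∩ Ω₁ with hNdef
  have hNnull : volume N = 0 := by
    have hsub : N ⊆ {y | ¬ DifferentiableAt ℝ U y} := by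
      intro y hy
      simp only [Set.mem_setOf_eq]
      intro hdU
      exact hy.1 (((huU y hy.2).differentiableAt_iff).2 hdU)
    exact measure_mono_null hsub (by simpa [ae_iff] using hUdiff)
  -- the preimage of N in Ω₀ is null
  have hBnull : volume (f ⁻¹' N ∩ Ω₀) = 0 := by
    have hsub : f ⁻¹' N ∩ Ω₀ ⊆ g '' N := by
      intro x hx
      exact ⟨f x, hx.1, hgf x hx.2⟩
    have := vol_image_le_of_lipschitzOnWith
      (hgl.mono (show N ⊆ Ω₁ from Set.inter_subset_right))
    apply le_antisymm _ zero_le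
    calc volume (f ⁻¹' N ∩ Ω₀) ≤ volume (g '' N) := measure_mono hsub
      _ ≤ (C' : ℝ≥0∞) ^ n * volume N := this
      _ = 0 := by rw [hNnull, mul_zero]
  have hae_uN : ∀ᵐ x ∂volume.restrict Ω₀, f x ∉ N := by
    rw [ae_iff]
    have : {x | ¬ f x ∉ N} = f ⁻¹' N := by ext x; simp
    rw [this, Measure.restrict_apply' mΩ₀]
    exact hBnull
  -- f is differentiable a.e. on Ω₀ (coordinatewise Rademacher)
  have hcoordLip : ∀ i : Fin n, LipschitzOnWith C' (fun x => f x i) Ω₀ := by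
    intro i
    apply LipschitzOnWith.of_dist_le_mul
    intro x hx y hy
    rw [Real.dist_eq, dist_eq_norm, hC'coe]
    calc |f x i - f y i| = ‖(f x - f y) i‖ := by
          simp [Real.norm_eq_abs, PiLp.sub_apply]
      _ ≤ ‖f x - f y‖ := euclid_coord_le_norm _ i
      _ ≤ C⁻¹ * ‖x - y‖ := (hbl x hx y hy).2
  have hFdiff : ∀ᵐ x : EuclideanSpace ℝ (Fin n) ∂volume, ∀ i : Fin n,
      DifferentiableAt ℝ (Classical.choose (hcoordLip i).extend_real) x := by
    rw [ae_all_iff]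
    intro i
    exact (Classical.choose_spec (hcoordLip i).extend_real).1.ae_differentiableAt
  have hae_fd : ∀ᵐ x ∂volume.restrict Ω₀, x ∈ Ω₀ → DifferentiableAt ℝ f x := by
    apply ae_restrict_of_ae
    filter_upwards [hFdiff] with x hx hxΩ
    rw [differentiableAt_euclidean]
    intro i
    have hev : (fun x => f x i) =ᶠ[nhds x] Classical.choose (hcoordLip i).extend_real :=
      Filter.eventually_of_mem (hΩ₀.mem_nhds hxΩ)
        (fun z hz => (Classical.choose_spec (hcoordLip i).extend_real).2 hz)
    exact hev.differentiableAt_iff.2 (hx i)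
  -- pointwise a.e. bound for the derivative of the composition
  have hae_bound : ∀ᵐ x ∂volume.restrict Ω₀,
      (‖fderiv ℝ (u ∘ f) x‖₊ : ℝ≥0∞) ^ 2 ≤
        (C' : ℝ≥0∞) ^ 2 * (‖fderiv ℝ u (f x)‖₊ : ℝ≥0∞) ^ 2 := by
    filter_upwards [ae_restrict_mem mΩ₀, hae_uN, hae_fd] with x hxΩ hfxN hfd
    have hdf : DifferentiableAt ℝ f x := hfd hxΩ
    have hdu : DifferentiableAt ℝ u (f x) := by
      by_contra hcon
      exact hfxN ⟨hcon, hbij.mapsTo hxΩ⟩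
    have hcomp : fderiv ℝ (u ∘ f) x = (fderiv ℝ u (f x)).comp (fderiv ℝ f x) :=
      fderiv_comp x hdu hdf
    have hfd_norm : ‖fderiv ℝ f x‖₊ ≤ C' := by
      rw [← NNReal.coe_le_coe, coe_nnnorm]
      exact hdf.hasFDerivAt.le_of_lipschitzOn (hΩ₀.mem_nhds hxΩ) hfl
    have h1 : ‖fderiv ℝ (u ∘ f) x‖₊ ≤ ‖fderiv ℝ u (f x)‖₊ * C' := by
      rw [hcomp]
      exact le_trans (ContinuousLinearMap.opNNNorm_comp_le _ _)
        (mul_le_mul_right hfd_norm _)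
    calc (‖fderiv ℝ (u ∘ f) x‖₊ : ℝ≥0∞) ^ 2
        ≤ ((‖fderiv ℝ u (f x)‖₊ * C' : ℝ≥0) : ℝ≥0∞) ^ 2 := by
          have : (‖fderiv ℝ (u ∘ f) x‖₊ : ℝ≥0∞) ≤ ((‖fderiv ℝ u (f x)‖₊ * C' : ℝ≥0) : ℝ≥0∞) := by
            exact_mod_cast h1
          exact pow_le_pow_left' this 2
      _ = (C' : ℝ≥0∞) ^ 2 * (‖fderiv ℝ u (f x)‖₊ : ℝ≥0∞) ^ 2 := by
          push_cast
          ring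
  -- measurability facts
  have humeas : AEMeasurable u (volume.restrict Ω₁) := hu.continuousOn.aemeasurable mΩ₁
  have hu2 : AEMeasurable (fun y => (‖u y‖₊ : ℝ≥0∞) ^ 2) (volume.restrict Ω₁) :=
    humeas.enorm.pow_const 2
  have hDu2 : Measurable (fun y => (‖fderiv ℝ u y‖₊ : ℝ≥0∞) ^ 2) :=
    ((measurable_fderiv ℝ u).enorm).pow_const 2
  have hufc : ContinuousOn (u ∘ f) Ω₀ := hu.continuousOn.comp hfc hbij.mapsTo
  have huf2 : AEMeasurable (fun x => (‖u (f x)‖₊ : ℝ≥0∞) ^ 2) (volume.restrict Ω₀) :=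
    (hufc.aemeasurable mΩ₀).enorm.pow_const 2
  -- the three integral bounds
  have hI0 : ∫⁻ x in Ω₀, (‖u (f x)‖₊ : ℝ≥0∞) ^ 2 ∂volume ≤
      (C' : ℝ≥0∞) ^ n * ∫⁻ y in Ω₁, (‖u y‖₊ : ℝ≥0∞) ^ 2 ∂volume :=
    key _ hu2
  have hI1 : ∫⁻ x in Ω₀, (‖fderiv ℝ (u ∘ f) x‖₊ : ℝ≥0∞) ^ 2 ∂volume ≤
      (C' : ℝ≥0∞) ^ (n + 2) * ∫⁻ y in Ω₁, (‖fderiv ℝ u y‖₊ : ℝ≥0∞) ^ 2 ∂volume := by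
    calc ∫⁻ x in Ω₀, (‖fderiv ℝ (u ∘ f) x‖₊ : ℝ≥0∞) ^ 2 ∂volume
        ≤ ∫⁻ x in Ω₀, (C' : ℝ≥0∞) ^ 2 * (‖fderiv ℝ u (f x)‖₊ : ℝ≥0∞) ^ 2 ∂volume :=
          lintegral_mono_ae hae_bound
      _ = (C' : ℝ≥0∞) ^ 2 * ∫⁻ x in Ω₀, (‖fderiv ℝ u (f x)‖₊ : ℝ≥0∞) ^ 2 ∂volume :=
          lintegral_const_mul' _ _ (ENNReal.pow_ne_top ENNReal.coe_ne_top)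
      _ ≤ (C' : ℝ≥0∞) ^ 2 * ((C' : ℝ≥0∞) ^ n *
            ∫⁻ y in Ω₁, (‖fderiv ℝ u y‖₊ : ℝ≥0∞) ^ 2 ∂volume) := by
          gcongr
          exact key _ hDu2.aemeasurable
      _ = (C' : ℝ≥0∞) ^ (n + 2) * ∫⁻ y in Ω₁, (‖fderiv ℝ u y‖₊ : ℝ≥0∞) ^ 2 ∂volume := by
          rw [← mul_assoc, ← pow_add]
          ring_nf
  -- combine
  have hone : (1 : ℝ≥0∞) ≤ (C' : ℝ≥0∞) := by exact_mod_cast hC'1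
  have hpow : ∀ m k : ℕ, m ≤ k → (C' : ℝ≥0∞) ^ m ≤ (C' : ℝ≥0∞) ^ k :=
    fun m k h => pow_le_pow_right₀ hone h
  have hKsq : ((C' ^ (n + 1) : ℝ≥0) : ℝ≥0∞) ^ 2 = (C' : ℝ≥0∞) ^ (2 * n + 2) := by
    push_cast
    rw [← pow_mul]
    ring_nf
  calc ∫⁻ x in Ω₀, ((‖u (f x)‖₊ : ℝ≥0∞) ^ 2 + (‖fderiv ℝ (u ∘ f) x‖₊ : ℝ≥0∞) ^ 2) ∂volume
      = (∫⁻ x in Ω₀, (‖u (f x)‖₊ : ℝ≥0∞) ^ 2 ∂volume)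
        + ∫⁻ x in Ω₀, (‖fderiv ℝ (u ∘ f) x‖₊ : ℝ≥0∞) ^ 2 ∂volume :=
        lintegral_add_left' huf2 _
    _ ≤ ((C' : ℝ≥0∞) ^ n * ∫⁻ y in Ω₁, (‖u y‖₊ : ℝ≥0∞) ^ 2 ∂volume)
        + (C' : ℝ≥0∞) ^ (n + 2) * ∫⁻ y in Ω₁, (‖fderiv ℝ u y‖₊ : ℝ≥0∞) ^ 2 ∂volume :=
        add_le_add hI0 hI1
    _ ≤ ((C' : ℝ≥0∞) ^ (2 * n + 2) * ∫⁻ y in Ω₁, (‖u y‖₊ : ℝ≥0∞) ^ 2 ∂volume)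
        + (C' : ℝ≥0∞) ^ (2 * n + 2) * ∫⁻ y in Ω₁, (‖fderiv ℝ u y‖₊ : ℝ≥0∞) ^ 2 ∂volume :=
        add_le_add (mul_le_mul' (hpow _ _ (by omega)) le_rfl)
          (mul_le_mul' (hpow _ _ (by omega)) le_rfl)
    _ = (C' : ℝ≥0∞) ^ (2 * n + 2) *
          ((∫⁻ y in Ω₁, (‖u y‖₊ : ℝ≥0∞) ^ 2 ∂volume)
            + ∫⁻ y in Ω₁, (‖fderiv ℝ u y‖₊ : ℝ≥0∞) ^ 2 ∂volume) := (mul_add _ _ _).symm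
    _ = ((C' ^ (n + 1) : ℝ≥0) : ℝ≥0∞) ^ 2 *
          ∫⁻ y in Ω₁, ((‖u y‖₊ : ℝ≥0∞) ^ 2 + (‖fderiv ℝ u y‖₊ : ℝ≥0∞) ^ 2) ∂volume := by
        rw [hKsq, lintegral_add_left' hu2]
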